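/- For any υ > 0 there exist positive constants c₁ = c₁(υ) and c₂ = c₂(υ) such that for all t ≥ υ, c₁ e^{−λt} ≤ sup_{x≥0} |φ_t(x) − ϖ₊| ≤ c₂ e^{−λt}. In particular, for t ≥ υ and all x ≥ 0, if x > ϖ₊ then (φ_t(x) − ϖ₊)/(ϖ₊ − ϖ₋) ≤ e^{−λt}/(1 − e^{−λυ}), while φ_t(x) ≤ ϖ₊ whenever x ≤ ϖ₊. -/

import Mathlib

set_option maxHeartbeats 1000000


noncomputable def lam (A R S : ℝ) : ℝ := 2 * Real.sqrt (A ^ 2 + R * S)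

noncomputable def wplus (A R S : ℝ) : ℝ := (A + lam A R S / 2) / S

noncomputable def wminus (A R S : ℝ) : ℝ := (A - lam A R S / 2) / S

/-- The closed-form Riccati semigroup `φ_t(x)`. -/
noncomputable def phi (A R S t x : ℝ) : ℝ :=
  wplus A R S +
    (x - wplus A R S) * ((wplus A R S - wminus A R S) * Real.exp (-(lam A R S) * t)) /
      ((wplus A R S - wminus A R S) * Real.exp (-(lam A R S) * t) +
        (x - wminus A R S) * (1 - Real.exp (-(lam A R S) * t)))

/-- `ϖ = 1 - ϖ₊/ϖ₋`. -/
noncomputable def vpi (A R S : ℝ) : ℝ := 1 - wplus A R S / wminus A R S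

theorem riccati_flow_exponential_decay (A R S : ℝ) (hR : 0 < R) (hS : 0 < S)
    (υ : ℝ) (hυ : 0 < υ) :
    (∃ c₁ > (0 : ℝ), ∃ c₂ > (0 : ℝ), ∀ t : ℝ, υ ≤ t →
        c₁ * Real.exp (-(lam A R S) * t) ≤
            sSup {y : ℝ | ∃ x : ℝ, 0 ≤ x ∧ y = |phi A R S t x - wplus A R S|} ∧
          sSup {y : ℝ | ∃ x : ℝ, 0 ≤ x ∧ y = |phi A R S t x - wplus A R S|} ≤
            c₂ * Real.exp (-(lam A R S) * t)) ∧
      ∀ t : ℝ, υ ≤ t → ∀ x : ℝ, 0 ≤ x →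
        (wplus A R S < x →
            (phi A R S t x - wplus A R S) / (wplus A R S - wminus A R S) ≤
              Real.exp (-(lam A R S) * t) / (1 - Real.exp (-(lam A R S) * υ))) ∧
          (x ≤ wplus A R S → phi A R S t x ≤ wplus A R S) := by
  set L := lam A R S with hL'
  set p := wplus A R S with hp'
  set m := wminus A R S with hm'
  have hRS : 0 < A ^ 2 + R * S := by positivity
  have hhalf : L / 2 = Real.sqrt (A ^ 2 + R * S) := by rw [hL', lam]; ring
  have hL : 0 < L := by rw [hL', lam]; positivity
  have hAL : |A| < L / 2 := by
    rw [hhalf]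
    exact (Real.lt_sqrt (abs_nonneg A)).2 (by rw [sq_abs]; nlinarith)
  have hApos : 0 < A + L / 2 := by have := neg_abs_le A; linarith
  have hAneg : A - L / 2 < 0 := by have := le_abs_self A; linarith
  have hpp : 0 < p := by
    rw [hp', wplus, ← hL']; exact div_pos hApos hS
  have hmm : m < 0 := by
    rw [hm', wminus, ← hL']; exact div_neg_of_neg_of_pos hAneg hS
  have hD : 0 < p - m := by linarith
  set q0 := Real.exp (-L * υ) with hq0'
  have hq0pos : 0 < q0 := Real.exp_pos _
  have hq0lt : q0 < 1 := by
    rw [hq0']; exact Real.exp_lt_one_iff.mpr (by nlinarith)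
  have h1q0 : 0 < 1 - q0 := by linarith
  have hphi : ∀ t x : ℝ, phi A R S t x - p =
      (x - p) * ((p - m) * Real.exp (-L * t)) /
        ((p - m) * Real.exp (-L * t) + (x - m) * (1 - Real.exp (-L * t))) := by
    intro t x
    simp only [phi, ← hp', ← hm', ← hL']
    ring
  -- constants
  set c₁ : ℝ := p * (p - m) / ((p - m) - m) with hc₁'
  set c₂ : ℝ := ((p - m) * (-m) + (p - m) * (p - m)) / ((1 - q0) * (-m)) with hc₂'
  have hc₁pos : 0 < c₁ := by
    apply div_pos (mul_pos hpp hD); linarith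
  have hden₂ : 0 < (1 - q0) * (-m) := mul_pos h1q0 (by linarith)
  have hc₂pos : 0 < c₂ := by
    apply div_pos _ hden₂
    nlinarith
  have hc₁eq : c₁ * ((p - m) - m) = p * (p - m) :=
    div_mul_cancel₀ _ (by nlinarith)
  have hc₂eq : c₂ * ((1 - q0) * (-m)) = (p - m) * (-m) + (p - m) * (p - m) :=
    div_mul_cancel₀ _ (ne_of_gt hden₂)
  -- per-time facts
  have qfacts : ∀ t : ℝ, υ ≤ t → 0 < Real.exp (-L * t) ∧ Real.exp (-L * t) ≤ q0 := by
    intro t ht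
    refine ⟨Real.exp_pos _, ?_⟩
    rw [hq0']
    exact Real.exp_le_exp.2 (by nlinarith)
  have hdenpos : ∀ t : ℝ, υ ≤ t → ∀ x : ℝ, 0 ≤ x →
      0 < (p - m) * Real.exp (-L * t) + (x - m) * (1 - Real.exp (-L * t)) := by
    intro t ht x hx
    obtain ⟨hq, hqq0⟩ := qfacts t ht
    have hq1 : Real.exp (-L * t) < 1 := lt_of_le_of_lt hqq0 hq0lt
    have := mul_pos hD hq
    nlinarith
  -- pointwise upper bound
  have hup : ∀ t : ℝ, υ ≤ t → ∀ x : ℝ, 0 ≤ x →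
      |phi A R S t x - p| ≤ c₂ * Real.exp (-L * t) := by
    intro t ht x hx
    obtain ⟨hq, hqq0⟩ := qfacts t ht
    set q := Real.exp (-L * t) with hqdef
    have hq1 : q < 1 := lt_of_le_of_lt hqq0 hq0lt
    have hden := hdenpos t ht x hx
    rw [hphi t x, abs_div, abs_of_pos hden, abs_mul,
      abs_of_pos (mul_pos hD hq), div_le_iff₀ hden]
    have h3 : |x - p| ≤ (x - m) + (p - m) :=
      abs_le.2 ⟨by linarith, by linarith⟩
    have h1 : (x - m) * (1 - q0) ≤ (p - m) * q + (x - m) * (1 - q) := by nlinarith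
    have h2 : (-m) * (1 - q0) ≤ (p - m) * q + (x - m) * (1 - q) := by nlinarith
    have hC : |x - p| * (p - m) ≤ c₂ * ((p - m) * q + (x - m) * (1 - q)) := by
      rw [← mul_le_mul_iff_of_pos_right hden₂]
      nlinarith [mul_le_mul_of_nonneg_left h1 (mul_pos hD (by linarith : (0:ℝ) < -m)).le,
        mul_le_mul_of_nonneg_left h2 (mul_pos hD hD).le,
        mul_le_mul_of_nonneg_right h3 (mul_pos hD hden₂).le]
    nlinarith [mul_le_mul_of_nonneg_right hC hq.le]
  constructor
  · refine ⟨c₁, hc₁pos, c₂, hc₂pos, fun t ht => ?_⟩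
    obtain ⟨hq, hqq0⟩ := qfacts t ht
    set q := Real.exp (-L * t) with hqdef
    have hq1 : q < 1 := lt_of_le_of_lt hqq0 hq0lt
    have hbdd : BddAbove {y : ℝ | ∃ x : ℝ, 0 ≤ x ∧ y = |phi A R S t x - p|} := by
      refine ⟨c₂ * q, ?_⟩
      rintro y ⟨x, hx, rfl⟩
      exact hup t ht x hx
    constructor
    · have hmem : |phi A R S t 0 - p| ∈ {y : ℝ | ∃ x : ℝ, 0 ≤ x ∧ y = |phi A R S t x - p|} :=
        ⟨0, le_refl 0, rfl⟩
      have hden0 := hdenpos t ht 0 le_rfl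
      have h0 : c₁ * q ≤ |phi A R S t 0 - p| := by
        rw [hphi t 0]
        have hnum : (0 - p) * ((p - m) * q) < 0 := by nlinarith [mul_pos hpp (mul_pos hD hq)]
        rw [abs_div, abs_of_pos hden0, abs_of_neg hnum, le_div_iff₀ hden0]
        have hle : (p - m) * q + (0 - m) * (1 - q) ≤ (p - m) - m := by nlinarith
        have hc₁q : c₁ * ((p - m) - m) * q = p * (p - m) * q := by rw [hc₁eq]
        nlinarith [mul_le_mul_of_nonneg_left hle (mul_pos hc₁pos hq).le]
      exact le_trans h0 (le_csSup hbdd hmem)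
    · refine Real.sSup_le ?_ (by positivity)
      rintro y ⟨x, hx, rfl⟩
      exact hup t ht x hx
  · intro t ht x hx
    obtain ⟨hq, hqq0⟩ := qfacts t ht
    set q := Real.exp (-L * t) with hqdef
    have hq1 : q < 1 := lt_of_le_of_lt hqq0 hq0lt
    have hden := hdenpos t ht x hx
    constructor
    · intro hpx
      rw [hphi t x, div_div, div_le_div_iff₀ (by positivity) h1q0]
      nlinarith [mul_pos (mul_pos hq hD) hD,
        mul_nonneg (mul_nonneg (mul_nonneg hq.le hD.le) (sub_nonneg.2 hpx.le))
          (sub_nonneg.2 hqq0)]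
    · intro hxp
      have h := hphi t x
      have : phi A R S t x - p ≤ 0 := by
        rw [h]
        apply div_nonpos_of_nonpos_of_nonneg _ hden.le
        apply mul_nonpos_of_nonpos_of_nonneg (by linarith) (mul_pos hD hq).le
      linarith
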